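/- For s ∈ ℝ, the function s ↦ ρ(A(s)) mapping s to the spectral radius of the Mauldin–Williams matrix A(s) (with entries Σ_{e ∈ E_{uv}} r_e^s, r_e ∈ (0,1), graph strongly connected with every vertex having an outgoing edge) is strictly decreasing on [0,∞). -/

import Mathlib

open Finset
open scoped ENNReal NNReal

attribute [local instance] Matrix.linftyOpNormedRing Matrix.linftyOpNormedAlgebra
  Matrix.linftyOpNormedSpace

section Aux

variable {V : Type*} [Fintype V] [DecidableEq V]

/-- Entrywise nonnegativity and domination are preserved by matrix powers. -/
lemma MW.pow_nonneg_le {P Q : Matrix V V ℝ} (hP : ∀ u v, 0 ≤ P u v)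
    (hPQ : ∀ u v, P u v ≤ Q u v) (n : ℕ) :
    (∀ u v, 0 ≤ (P ^ n) u v) ∧ (∀ u v, (P ^ n) u v ≤ (Q ^ n) u v) := by
  induction n with
  | zero =>
      refine ⟨fun u v => ?_, fun u v => ?_⟩ <;> simp [Matrix.one_apply] <;> positivity
  | succ n ih =>
      refine ⟨fun u v => ?_, fun u v => ?_⟩
      · rw [pow_succ, Matrix.mul_apply]
        exact Finset.sum_nonneg fun w _ => mul_nonneg (ih.1 u w) (hP w v)
      · rw [pow_succ, pow_succ, Matrix.mul_apply, Matrix.mul_apply]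
        exact Finset.sum_le_sum fun w _ =>
          mul_le_mul (ih.2 u w) (hPQ w v) (hP w v) ((ih.1 u w).trans (ih.2 u w))

/-- The `L∞`-operator norm is monotone w.r.t. entrywise domination of nonnegative
real matrices (viewed as complex matrices). -/
lemma MW.nnnorm_map_le {P Q : Matrix V V ℝ} (hP : ∀ u v, 0 ≤ P u v)
    (hPQ : ∀ u v, P u v ≤ Q u v) :
    ‖P.map Complex.ofReal‖₊ ≤ ‖Q.map Complex.ofReal‖₊ := by
  rw [Matrix.linfty_opNNNorm_def, Matrix.linfty_opNNNorm_def]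
  refine Finset.sup_mono_fun fun u _ => Finset.sum_le_sum fun v _ => ?_
  simp only [Matrix.map_apply, Complex.nnnorm_real]
  have h : ‖P u v‖ ≤ ‖Q u v‖ := by
    rw [Real.norm_of_nonneg (hP u v), Real.norm_of_nonneg ((hP u v).trans (hPQ u v))]
    exact hPQ u v
  rwa [← coe_nnnorm, ← coe_nnnorm, NNReal.coe_le_coe] at h

/-- Each entry is bounded by the `L∞`-operator norm. -/
lemma MW.entry_nnnorm_le (P : Matrix V V ℝ) (u v : V) :
    ‖P u v‖₊ ≤ ‖P.map Complex.ofReal‖₊ := by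
  rw [Matrix.linfty_opNNNorm_def]
  calc ‖P u v‖₊ = ‖(P.map Complex.ofReal) u v‖₊ := by simp [Complex.nnnorm_real]
    _ ≤ ∑ w, ‖(P.map Complex.ofReal) u w‖₊ :=
        Finset.single_le_sum (f := fun w => ‖(P.map Complex.ofReal) u w‖₊) (fun w _ => zero_le) (Finset.mem_univ v)
    _ ≤ _ := Finset.le_sup (f := fun u => ∑ w, ‖(P.map Complex.ofReal) u w‖₊) (Finset.mem_univ u)

/-- If there is an edge-path from `u` to `v` then some power of the matrix has positive
`(u,v)` entry. -/
lemma MW.exists_pow_pos {E : Type*} {src tgt : E → V} {N : Matrix V V ℝ}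
    (hN0 : ∀ u v, 0 ≤ N u v)
    (hNpos : ∀ u v, (∃ e, src e = u ∧ tgt e = v) → 0 < N u v) {u v : V}
    (h : Relation.ReflTransGen (fun a b => ∃ e, src e = a ∧ tgt e = b) u v) :
    ∃ p, 0 < (N ^ p) u v := by
  induction h with
  | refl => exact ⟨0, by simp [Matrix.one_apply]⟩
  | tail _ hbc ih =>
      obtain ⟨p, hp⟩ := ih
      refine ⟨p + 1, ?_⟩
      rw [pow_succ, Matrix.mul_apply]
      have hNn := (MW.pow_nonneg_le hN0 (fun u v => le_refl (N u v)) p).1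
      calc (0:ℝ) < (N ^ p) u _ * N _ _ := mul_pos hp (hNpos _ _ hbc)
        _ ≤ _ := Finset.single_le_sum
            (fun w _ => mul_nonneg (hNn u w) (hN0 w _)) (Finset.mem_univ _)

/-- Diagonal entries of powers dominate powers of diagonal entries, for nonnegative
matrices. -/
lemma MW.diag_pow_le {M : Matrix V V ℝ} (hM : ∀ u v, 0 ≤ M u v) (u : V) (n : ℕ) :
    (M u u) ^ n ≤ (M ^ n) u u := by
  induction n with
  | zero => simp [Matrix.one_apply]
  | succ n ih =>
      have hMn := (MW.pow_nonneg_le hM (fun u v => le_refl (M u v)) n).1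
      rw [pow_succ, pow_succ, Matrix.mul_apply]
      calc (M u u) ^ n * M u u ≤ (M ^ n) u u * M u u :=
            mul_le_mul_of_nonneg_right ih (hM u u)
        _ ≤ _ := Finset.single_le_sum
            (fun w _ => mul_nonneg (hMn u w) (hM w u)) (Finset.mem_univ u)

end Aux

/-- For a strongly connected Mauldin–Williams graph (all weights in `(0,1)`, every vertex
with an outgoing edge), the spectral radius of the Mauldin–Williams matrix `A(s)` is a
strictly decreasing function of the real variable `s` on `[0,∞)`. -/
theorem spectralRadius_MW_strictAntiOn
    {V : Type*} [Fintype V] [DecidableEq V] [Nonempty V] {E : Type*} [Fintype E]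
    (src tgt : E → V) (r : E → ℝ) (hr : ∀ e, 0 < r e ∧ r e < 1)
    (hout : ∀ u : V, ∃ e, src e = u)
    (hconn : ∀ u v : V, Relation.ReflTransGen (fun a b => ∃ e, src e = a ∧ tgt e = b) u v)
    (A : ℝ → Matrix V V ℂ)
    (hA : ∀ s u v, A s u v =
      ∑ e ∈ univ.filter (fun e => src e = u ∧ tgt e = v), ((r e : ℂ) ^ (s : ℂ))) :
    StrictAntiOn (fun s => spectralRadius ℂ (A s)) (Set.Ici (0 : ℝ)) := by
  -- the real Mauldin–Williams matrix
  set N : ℝ → Matrix V V ℝ := fun s => Matrix.of fun u v =>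
    ∑ e ∈ univ.filter (fun e => src e = u ∧ tgt e = v), (r e) ^ s with hNdef
  have hAN : ∀ s, A s = (N s).map Complex.ofReal := by
    intro s
    ext u v
    rw [hA s u v, Matrix.map_apply]
    simp only [hNdef, Matrix.of_apply, Complex.ofReal_sum]
    exact Finset.sum_congr rfl fun e _ => (Complex.ofReal_cpow (hr e).1.le s).symm
  have hN0 : ∀ s u v, 0 ≤ N s u v := fun s u v =>
    Finset.sum_nonneg fun e _ => Real.rpow_nonneg (hr e).1.le s
  have hNpos : ∀ s u v, (∃ e, src e = u ∧ tgt e = v) → 0 < N s u v := by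
    rintro s u v ⟨e, he⟩
    exact Finset.sum_pos (fun e' _ => Real.rpow_pos_of_pos (hr e').1 s)
      ⟨e, Finset.mem_filter.2 ⟨Finset.mem_univ e, he⟩⟩
  have hmappow : ∀ (R : Matrix V V ℝ) (n : ℕ),
      (R.map Complex.ofReal) ^ n = (R ^ n).map Complex.ofReal := by
    intro R n
    have := map_pow (Complex.ofRealHom.mapMatrix (m := V)) R n
    exact this.symm
  -- positivity of the spectral radius
  have hρpos : ∀ s : ℝ, 0 < spectralRadius ℂ (A s) := by
    intro s
    obtain ⟨u0⟩ := (inferInstance : Nonempty V)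
    obtain ⟨e0, he0⟩ := hout u0
    have hedge : 0 < N s u0 (tgt e0) := hNpos s u0 (tgt e0) ⟨e0, he0, rfl⟩
    obtain ⟨p, hp⟩ := MW.exists_pow_pos (hN0 s) (hNpos s) (hconn (tgt e0) u0)
    have hNn := fun m => (MW.pow_nonneg_le (hN0 s) (fun u v => le_refl (N s u v)) m).1
    -- a closed walk of length q := p + 1 at u0
    set q : ℕ := p + 1 with hq
    have hw : 0 < ((N s) ^ q) u0 u0 := by
      rw [hq, pow_succ', Matrix.mul_apply]
      calc (0:ℝ) < N s u0 (tgt e0) * ((N s) ^ p) (tgt e0) u0 := mul_pos hedge hp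
        _ ≤ _ := Finset.single_le_sum
            (fun w _ => mul_nonneg (hN0 s u0 w) (hNn p w u0)) (Finset.mem_univ _)
    set w : ℝ≥0 := ‖((N s) ^ q) u0 u0‖₊ with hwdef
    have hw0 : 0 < w := by
      rw [hwdef]
      exact nnnorm_pos.2 hw.ne'
    -- entries of (N s)^(q*n) dominate w^n
    have hkey : ∀ n : ℕ, (w : ℝ≥0∞) ^ n ≤ (‖(A s) ^ (q * n)‖₊ : ℝ≥0∞) := by
      intro n
      rw [hAN s, hmappow]
      have h1 : (((N s) ^ q) u0 u0) ^ n ≤ ((N s) ^ (q * n)) u0 u0 := by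
        rw [pow_mul]
        exact MW.diag_pow_le (hNn q) u0 n
      have h2 : ((((N s) ^ q) u0 u0) ^ n : ℝ) = ((w ^ n : ℝ≥0) : ℝ) := by
        rw [hwdef]
        simp [Real.nnnorm_of_nonneg (hNn q u0 u0)]
      have h3 : (w ^ n : ℝ≥0) ≤ ‖((N s) ^ (q * n)) u0 u0‖₊ := by
        rw [← NNReal.coe_le_coe, ← h2, coe_nnnorm,
          Real.norm_of_nonneg (hNn (q * n) u0 u0)]
        exact h1
      exact_mod_cast h3.trans (MW.entry_nnnorm_le _ u0 u0)
    -- pass to the limit along the subsequence n ↦ q * n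
    have hgel := spectrum.pow_nnnorm_pow_one_div_tendsto_nhds_spectralRadius (A s)
    have hmono : Filter.Tendsto (fun n : ℕ => q * n) Filter.atTop Filter.atTop := by
      apply Filter.tendsto_atTop_mono (f := fun n : ℕ => n) _ Filter.tendsto_id
      intro n
      exact Nat.le_mul_of_pos_left n (Nat.succ_pos p)
    have hsub := hgel.comp hmono
    refine lt_of_lt_of_le (b := (w : ℝ≥0∞) ^ (1 / (q : ℝ))) ?_ ?_
    · exact ENNReal.rpow_pos (by exact_mod_cast hw0) ENNReal.coe_ne_top
    · refine ge_of_tendsto hsub ?_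
      filter_upwards [Filter.eventually_ge_atTop 1] with n hn
      have hqn : ((q * n : ℕ) : ℝ) ≠ 0 := by
        have : 0 < q * n := Nat.mul_pos (Nat.succ_pos p) hn
        exact_mod_cast this.ne'
      have : (w : ℝ≥0∞) ^ (1 / (q : ℝ)) =
          ((w : ℝ≥0∞) ^ n) ^ (1 / ((q * n : ℕ) : ℝ)) := by
        rw [← ENNReal.rpow_natCast ((w : ℝ≥0∞)) n, ← ENNReal.rpow_mul]
        congr 1
        field_simp
        rw [Nat.cast_mul, mul_div_cancel_left₀ _ (Nat.cast_ne_zero.2 (Nat.succ_ne_zero p) : (q:ℝ) ≠ 0)]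
      rw [this]
      exact ENNReal.rpow_le_rpow (hkey n) (by positivity)
  have hρne : ∀ s : ℝ, spectralRadius ℂ (A s) ≠ ⊤ := fun s =>
    ((spectrum.spectralRadius_le_nnnorm (𝕜 := ℂ) (A s)).trans_lt ENNReal.coe_lt_top).ne
  -- main monotonicity argument
  intro s hs t _ hst
  simp only
  -- the maximal weight
  obtain ⟨e₀⟩ : Nonempty E := ⟨(hout (Classical.arbitrary V)).choose⟩
  obtain ⟨em, _, hem⟩ := Finset.exists_max_image Finset.univ r ⟨e₀, Finset.mem_univ e₀⟩
  set c : ℝ := (r em) ^ (t - s) with hcdef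
  have hc0 : 0 < c := Real.rpow_pos_of_pos (hr em).1 _
  have hc1 : c < 1 := Real.rpow_lt_one (hr em).1.le (hr em).2 (by linarith)
  set cn : ℝ≥0 := ‖c‖₊ with hcndef
  have hcn1 : (cn : ℝ≥0∞) < 1 := by
    have h : (‖c‖₊ : ℝ) < 1 := by
      rw [coe_nnnorm, Real.norm_eq_abs, abs_of_nonneg hc0.le]
      exact hc1
    rw [hcndef]
    exact_mod_cast h
  -- entrywise comparison: N t ≤ c • N s
  have hentry : ∀ u v, N t u v ≤ (c • N s) u v := by
    intro u v
    rw [Matrix.smul_apply, smul_eq_mul, hNdef]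
    simp only [Matrix.of_apply]
    rw [Finset.mul_sum]
    refine Finset.sum_le_sum fun e _ => ?_
    have h1 : (r e) ^ t = (r e) ^ (t - s) * (r e) ^ s := by
      rw [← Real.rpow_add (hr e).1]; ring_nf
    rw [h1, hcdef]
    exact mul_le_mul_of_nonneg_right
      (Real.rpow_le_rpow (hr e).1.le (hem e (Finset.mem_univ e)) (by linarith))
      (Real.rpow_nonneg (hr e).1.le s)
  -- norm comparison for powers
  have hkey : ∀ n : ℕ, ‖(A t) ^ n‖₊ ≤ cn ^ n * ‖(A s) ^ n‖₊ := by
    intro n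
    rw [hAN t, hAN s, hmappow, hmappow]
    have h1 : ‖((N t) ^ n).map Complex.ofReal‖₊ ≤ ‖((c • N s) ^ n).map Complex.ofReal‖₊ :=
      MW.nnnorm_map_le (MW.pow_nonneg_le (hN0 t) hentry n).1
        (MW.pow_nonneg_le (hN0 t) hentry n).2
    have h2 : ((c • N s) ^ n : Matrix V V ℝ) = c ^ n • ((N s) ^ n) := smul_pow c (N s) n
    have h3 : ((c ^ n • ((N s) ^ n) : Matrix V V ℝ)).map Complex.ofReal =
        (c ^ n) • (((N s) ^ n).map Complex.ofReal) := by
      ext u v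
      simp [Matrix.map_apply, Complex.real_smul]
    calc ‖((N t) ^ n).map Complex.ofReal‖₊
        ≤ ‖((c • N s) ^ n).map Complex.ofReal‖₊ := h1
      _ = ‖(c ^ n) • (((N s) ^ n).map Complex.ofReal)‖₊ := by rw [h2, h3]
      _ = ‖c ^ n‖₊ * ‖((N s) ^ n).map Complex.ofReal‖₊ := nnnorm_smul _ _
      _ = cn ^ n * ‖((N s) ^ n).map Complex.ofReal‖₊ := by rw [hcndef, nnnorm_pow]
  -- Gelfand's formula and passage to the limit
  have hgt := spectrum.pow_nnnorm_pow_one_div_tendsto_nhds_spectralRadius (A t)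
  have hgs := spectrum.pow_nnnorm_pow_one_div_tendsto_nhds_spectralRadius (A s)
  have hgs' : Filter.Tendsto
      (fun n : ℕ => (cn : ℝ≥0∞) * (‖(A s) ^ n‖₊ : ℝ≥0∞) ^ (1 / (n : ℝ)))
      Filter.atTop (nhds ((cn : ℝ≥0∞) * spectralRadius ℂ (A s))) :=
    ENNReal.Tendsto.const_mul hgs (Or.inl (hρpos s).ne')
  have hle : spectralRadius ℂ (A t) ≤ (cn : ℝ≥0∞) * spectralRadius ℂ (A s) := by
    refine le_of_tendsto_of_tendsto hgt hgs' ?_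
    filter_upwards [Filter.eventually_ge_atTop 1] with n hn
    have hn0 : (n : ℝ) ≠ 0 := by exact_mod_cast (Nat.pos_of_ne_zero (by omega)).ne'
    calc (‖(A t) ^ n‖₊ : ℝ≥0∞) ^ (1 / (n : ℝ))
        ≤ ((cn ^ n * ‖(A s) ^ n‖₊ : ℝ≥0) : ℝ≥0∞) ^ (1 / (n : ℝ)) :=
          ENNReal.rpow_le_rpow (by exact_mod_cast hkey n) (by positivity)
      _ = ((cn : ℝ≥0∞) ^ n) ^ (1 / (n : ℝ)) * (‖(A s) ^ n‖₊ : ℝ≥0∞) ^ (1 / (n : ℝ)) := by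
          rw [ENNReal.coe_mul, ENNReal.mul_rpow_of_nonneg _ _ (by positivity),
            ENNReal.coe_pow]
      _ = (cn : ℝ≥0∞) * (‖(A s) ^ n‖₊ : ℝ≥0∞) ^ (1 / (n : ℝ)) := by
          rw [← ENNReal.rpow_natCast ((cn : ℝ≥0∞)) n, ← ENNReal.rpow_mul,
            mul_one_div_cancel hn0, ENNReal.rpow_one]
  refine lt_of_le_of_lt hle ?_
  calc (cn : ℝ≥0∞) * spectralRadius ℂ (A s)
      < 1 * spectralRadius ℂ (A s) := by
        exact ENNReal.mul_lt_mul_left (hρpos s).ne' (hρne s) hcn1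
    _ = spectralRadius ℂ (A s) := one_mul _
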